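/- arXiv:1202.1151 — 4 statements merged into one kernel-verified Lean document; each statement's English description precedes it below -/
import Mathlib

section
/- Let p ∈ ℝ^N with |p| = 1, and let Ω be the set of antisymmetric N×N matrices ω with entries in {-1,0,1}. For ω ∈ Ω set p_ω := ω p (i.e. (p_ω)_i = Σ_j ω_{ij} p^j). Then there exist constants c, C > 0 depending only on N such that for all q ∈ ℝ^N: c|q| ≤ Σ_{ω ∈ Ω} |⟨p_ω, q⟩| + |⟨p, q⟩| ≤ C|q|. -/
open RealInnerProductSpace Finset

/-- The value map sending `Fin 3` to the allowed entries `{-1, 0, 1}`. -/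
noncomputable def entryVal : Fin 3 → ℝ := ![(-1 : ℝ), 0, 1]

open Classical in
/-- The (finite) set of antisymmetric `N × N` matrices with entries in `{-1,0,1}`,
encoded as functions `Fin N → Fin N → Fin 3` via `entryVal`. -/
noncomputable def OmegaSet (N : ℕ) : Finset (Fin N → Fin N → Fin 3) :=
  Finset.univ.filter (fun ω => ∀ i j, entryVal (ω i j) = - entryVal (ω j i))

/-- `p_ω := ω p`, i.e. `(p_ω)_i = ∑_j ω_{ij} p_j`. -/
noncomputable def pOmega {N : ℕ} (ω : Fin N → Fin N → Fin 3)
    (p : EuclideanSpace ℝ (Fin N)) : EuclideanSpace ℝ (Fin N) :=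
  WithLp.toLp 2 (fun i => ∑ j, entryVal (ω i j) * p j)

/-- elementary antisymmetric matrix with `+1` at `(a,b)`, `-1` at `(b,a)` (zero if `a = b`). -/
noncomputable def matP {N : ℕ} (a b : Fin N) : Fin N → Fin N → Fin 3 :=
  fun i j => if a = b then 1 else if i = a ∧ j = b then 2 else if i = b ∧ j = a then 0 else 1

lemma matP_mem {N : ℕ} (a b : Fin N) : matP a b ∈ OmegaSet N := by
  classical
  simp only [OmegaSet, Finset.mem_filter, Finset.mem_univ, true_and]
  intro i j
  unfold matP
  by_cases hab : a = b
  · simp [hab, entryVal]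
  · by_cases h1 : i = a <;> by_cases h2 : j = b <;> by_cases h3 : i = b <;>
      by_cases h4 : j = a <;> simp_all [entryVal]

lemma inner_eq {N : ℕ} (x y : EuclideanSpace ℝ (Fin N)) : ⟪x, y⟫ = ∑ i, x i * y i := by
  simp [PiLp.inner_apply, RCLike.inner_apply, mul_comm]

lemma comp_le_norm {N : ℕ} (x : EuclideanSpace ℝ (Fin N)) (i : Fin N) : |x i| ≤ ‖x‖ := by
  rw [EuclideanSpace.norm_eq, ← Real.sqrt_sq_eq_abs]
  apply Real.sqrt_le_sqrt
  exact Finset.single_le_sum (f := fun j => ‖x j‖^2) (fun j _ => sq_nonneg _)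
    (mem_univ i) |>.trans_eq' (by simp [sq_abs])

lemma norm_le_sum_abs {N : ℕ} (x : EuclideanSpace ℝ (Fin N)) : ‖x‖ ≤ ∑ i, |x i| := by
  rw [EuclideanSpace.norm_eq]
  calc Real.sqrt (∑ i, ‖x i‖^2) ≤ Real.sqrt ((∑ i, |x i|)^2) := by
        apply Real.sqrt_le_sqrt
        simpa [Real.norm_eq_abs] using
          Finset.sum_sq_le_sq_sum_of_nonneg (f := fun i => |x i|) (fun i _ => abs_nonneg _)
    _ = ∑ i, |x i| := Real.sqrt_sq (by positivity)

lemma abs_entryVal_le (x : Fin 3) : |entryVal x| ≤ 1 := by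
  fin_cases x <;> norm_num [entryVal]

lemma pOmega_matP {N : ℕ} (a b : Fin N) (hab : a ≠ b) (p : EuclideanSpace ℝ (Fin N))
    (i : Fin N) :
    pOmega (matP a b) p i = (if i = a then p b else 0) - (if i = b then p a else 0) := by
  unfold pOmega matP
  have key : ∀ j : Fin N,
      entryVal (if a = b then 1 else if i = a ∧ j = b then 2 else if i = b ∧ j = a then 0 else 1)
        * p j
      = (if i = a ∧ j = b then p j else 0) - (if i = b ∧ j = a then p j else 0) := by
    intro j
    simp only [hab, if_false]
    by_cases h1 : i = a <;> by_cases h2 : j = b <;> by_cases h3 : i = b <;>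
      by_cases h4 : j = a <;> simp_all [entryVal]
  rw [WithLp.ofLp_toLp]
  rw [Finset.sum_congr rfl (fun j _ => key j), Finset.sum_sub_distrib]
  congr 1
  · by_cases h : i = a
    · simp [h]
    · simp [h]
  · by_cases h : i = b
    · simp [h]
    · simp [h]

lemma inner_matP {N : ℕ} (a b : Fin N) (p q : EuclideanSpace ℝ (Fin N)) :
    ⟪pOmega (matP a b) p, q⟫ = p b * q a - p a * q b := by
  by_cases hab : a = b
  · subst hab
    rw [inner_eq]
    simp [pOmega, matP, entryVal]
  · rw [inner_eq]
    rw [Finset.sum_congr rfl (fun i _ => by rw [pOmega_matP a b hab p i])]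
    simp only [sub_mul, Finset.sum_sub_distrib, ite_mul, zero_mul]
    rw [Finset.sum_ite_eq' , Finset.sum_ite_eq']
    simp

theorem stmt0 (N : ℕ) :
    ∃ c C : ℝ, 0 < c ∧ 0 < C ∧
      ∀ (p : EuclideanSpace ℝ (Fin N)), ‖p‖ = 1 →
        ∀ q : EuclideanSpace ℝ (Fin N),
          c * ‖q‖ ≤ (∑ ω ∈ OmegaSet N, |⟪pOmega ω p, q⟫|) + |⟪p, q⟫| ∧
          (∑ ω ∈ OmegaSet N, |⟪pOmega ω p, q⟫|) + |⟪p, q⟫| ≤ C * ‖q‖ := by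
  classical
  refine ⟨1 / (N^2 + N + 1), (OmegaSet N).card * N^2 + 1, by positivity, by positivity, ?_⟩
  intro p hp q
  set S : ℝ := ∑ ω ∈ OmegaSet N, |⟪pOmega ω p, q⟫| with hS
  have hSnn : 0 ≤ S := Finset.sum_nonneg fun ω _ => abs_nonneg _
  have hRnn : 0 ≤ S + |⟪p, q⟫| := by positivity
  have hpj : ∀ j, |p j| ≤ 1 := fun j => (comp_le_norm p j).trans_eq hp
  have hqi : ∀ i, |q i| ≤ ‖q‖ := comp_le_norm q
  constructor
  · -- lower bound
    -- each elementary inner product is dominated by S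
    have hsingle : ∀ a b : Fin N, |⟪pOmega (matP a b) p, q⟫| ≤ S :=
      fun a b => Finset.single_le_sum (f := fun ω => |⟪pOmega ω p, q⟫|)
        (fun ω _ => abs_nonneg _) (matP_mem a b)
    have hpp : ∑ j, p j * p j = 1 := by
      have := real_inner_self_eq_norm_sq p
      rw [hp] at this
      rw [← inner_eq p p, this]; norm_num
    have hkey : ∀ k : Fin N, q k - p k * ⟪p, q⟫ = ∑ j, p j * ⟪pOmega (matP k j) p, q⟫ := by
      intro k
      have : ∀ j : Fin N, p j * ⟪pOmega (matP k j) p, q⟫ = p j * (p j * q k - p k * q j) := by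
        intro j; rw [inner_matP]
      rw [Finset.sum_congr rfl (fun j _ => this j)]
      have expand : ∑ j, p j * (p j * q k - p k * q j)
          = q k * (∑ j, p j * p j) - p k * (∑ j, p j * q j) := by
        rw [Finset.mul_sum, Finset.mul_sum, ← Finset.sum_sub_distrib]
        congr 1; ext j; ring
      rw [expand, hpp, inner_eq]
      ring
    have hcomp : ∀ k : Fin N, |q k| ≤ |⟪p, q⟫| + N * S := by
      intro k
      have h1 : |q k| ≤ |p k * ⟪p, q⟫| + |∑ j, p j * ⟪pOmega (matP k j) p, q⟫| := by
        have := hkey k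
        calc |q k| = |p k * ⟪p, q⟫ + (q k - p k * ⟪p, q⟫)| := by ring_nf
          _ ≤ |p k * ⟪p, q⟫| + |q k - p k * ⟪p, q⟫| := abs_add_le _ _
          _ = _ := by rw [this]
      have h2 : |p k * ⟪p, q⟫| ≤ |⟪p, q⟫| := by
        rw [abs_mul]
        exact mul_le_of_le_one_left (abs_nonneg _) (hpj k)
      have h3 : |∑ j, p j * ⟪pOmega (matP k j) p, q⟫| ≤ N * S := by
        calc |∑ j, p j * ⟪pOmega (matP k j) p, q⟫|
            ≤ ∑ j, |p j * ⟪pOmega (matP k j) p, q⟫| := Finset.abs_sum_le_sum_abs _ _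
          _ ≤ ∑ j : Fin N, S := by
              apply Finset.sum_le_sum
              intro j _
              rw [abs_mul]
              exact (mul_le_of_le_one_left (abs_nonneg _) (hpj j)).trans (hsingle k j)
          _ = N * S := by simp [mul_comm]
      linarith
    have hq : ‖q‖ ≤ N * |⟪p, q⟫| + N^2 * S := by
      calc ‖q‖ ≤ ∑ k, |q k| := norm_le_sum_abs q
        _ ≤ ∑ k : Fin N, (|⟪p, q⟫| + N * S) := Finset.sum_le_sum fun k _ => hcomp k
        _ = N * |⟪p, q⟫| + N^2 * S := by
            simp [Finset.sum_const, Finset.card_univ]; ring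
    have : ‖q‖ ≤ (N^2 + N + 1) * (S + |⟪p, q⟫|) := by nlinarith [abs_nonneg (⟪p, q⟫ : ℝ)]
    rw [div_mul_eq_mul_div, div_le_iff₀ (by positivity)]
    linarith
  · -- upper bound
    have hterm : ∀ ω ∈ OmegaSet N, |⟪pOmega ω p, q⟫| ≤ (N^2 : ℝ) * ‖q‖ := by
      intro ω _
      have hnorm : ‖pOmega ω p‖ ≤ (N^2 : ℝ) := by
        calc ‖pOmega ω p‖ ≤ ∑ i, |pOmega ω p i| := norm_le_sum_abs _
          _ ≤ ∑ i : Fin N, (N : ℝ) := by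
              apply Finset.sum_le_sum
              intro i _
              calc |pOmega ω p i| = |∑ j, entryVal (ω i j) * p j| := rfl
                _ ≤ ∑ j, |entryVal (ω i j) * p j| := Finset.abs_sum_le_sum_abs _ _
                _ ≤ ∑ j : Fin N, (1 : ℝ) := by
                    apply Finset.sum_le_sum
                    intro j _
                    rw [abs_mul]
                    exact mul_le_one₀ (abs_entryVal_le _) (abs_nonneg _) (hpj j)
                _ = (N : ℝ) := by simp
          _ = (N^2 : ℝ) := by simp; ring
      calc |⟪pOmega ω p, q⟫| ≤ ‖pOmega ω p‖ * ‖q‖ := abs_real_inner_le_norm _ _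
        _ ≤ (N^2 : ℝ) * ‖q‖ := by
            apply mul_le_mul_of_nonneg_right hnorm (norm_nonneg q)
    have hSle : S ≤ (OmegaSet N).card * (N^2 : ℝ) * ‖q‖ := by
      calc S ≤ ∑ _ω ∈ OmegaSet N, (N^2 : ℝ) * ‖q‖ := Finset.sum_le_sum hterm
        _ = (OmegaSet N).card * (N^2 : ℝ) * ‖q‖ := by
            rw [Finset.sum_const, nsmul_eq_mul]; ring
    have hip : |⟪p, q⟫| ≤ ‖q‖ := by
      calc |⟪p, q⟫| ≤ ‖p‖ * ‖q‖ := abs_real_inner_le_norm _ _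
        _ = ‖q‖ := by rw [hp, one_mul]
    calc S + |⟪p, q⟫| ≤ (OmegaSet N).card * (N^2 : ℝ) * ‖q‖ + ‖q‖ := by linarith
      _ = ((OmegaSet N).card * N^2 + 1) * ‖q‖ := by push_cast; ring
end

section
/- Let p, q ∈ ℝ^N with |p| = |q| = 1 and p ⊥ q, N ≥ 2. Then there exist indices i₀ ≠ k₀ such that |p_{i₀}| ≥ 1/(2√(N−1)) and |q_{k₀}| ≥ 1/(2√(N−1)). -/
open RealInnerProductSpace Finset

private lemma sq_le_abs' (c x : ℝ) (hc : 0 ≤ c) (h : c ^ 2 ≤ x ^ 2) : c ≤ |x| := by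
  have := Real.sqrt_le_sqrt h
  rwa [Real.sqrt_sq hc, Real.sqrt_sq_eq_abs] at this

theorem stmt2 (N : ℕ) (hN : 2 ≤ N)
    (p q : EuclideanSpace ℝ (Fin N)) (hp : ‖p‖ = 1) (hq : ‖q‖ = 1)
    (hpq : ⟪p, q⟫ = 0) :
    ∃ i₀ k₀ : Fin N, i₀ ≠ k₀ ∧
      1 / (2 * Real.sqrt ((N : ℝ) - 1)) ≤ |p i₀| ∧
      1 / (2 * Real.sqrt ((N : ℝ) - 1)) ≤ |q k₀| := by
  have hn2 : (2:ℝ) ≤ (N:ℝ) := by exact_mod_cast hN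
  have hn1 : (0:ℝ) < (N:ℝ) - 1 := by linarith
  set c : ℝ := 1 / (2 * Real.sqrt ((N:ℝ) - 1)) with hcdef
  have hs : (0:ℝ) < Real.sqrt ((N:ℝ) - 1) := Real.sqrt_pos.2 hn1
  have hcpos : 0 < c := by rw [hcdef]; positivity
  have hc2 : c ^ 2 = 1 / (4 * ((N:ℝ) - 1)) := by
    rw [hcdef, div_pow, mul_pow, Real.sq_sqrt hn1.le]; norm_num
  -- sums from norms and inner product
  have hP : ∑ j, p j ^ 2 = 1 := by
    have h1 : ⟪p, p⟫ = 1 := by rw [real_inner_self_eq_norm_sq, hp]; norm_num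
    rw [PiLp.inner_apply] at h1
    simpa [PiLp.inner_apply, RCLike.inner_apply, sq] using h1
  have hQ : ∑ j, q j ^ 2 = 1 := by
    have h1 : ⟪q, q⟫ = 1 := by rw [real_inner_self_eq_norm_sq, hq]; norm_num
    rw [PiLp.inner_apply] at h1
    simpa [PiLp.inner_apply, RCLike.inner_apply, sq] using h1
  have hPQ : ∑ j, p j * q j = 0 := by
    simpa [PiLp.inner_apply, RCLike.inner_apply, mul_comm] using hpq
  have hNe : (univ : Finset (Fin N)).Nonempty := ⟨⟨0, by omega⟩, mem_univ _⟩
  obtain ⟨i, -, hi⟩ := exists_max_image (univ : Finset (Fin N)) (fun j => |p j|) hNe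
  obtain ⟨k, -, hk⟩ := exists_max_image (univ : Finset (Fin N)) (fun j => |q j|) hNe
  -- max coordinate is at least 1/√N, which beats c
  have key : ∀ (x : EuclideanSpace ℝ (Fin N)) (m : Fin N),
      (∑ j, x j ^ 2 = 1) → (∀ j, |x j| ≤ |x m|) → c ≤ |x m| := by
    intro x m hx hm
    have hb : ∀ j ∈ (univ : Finset (Fin N)), x j ^ 2 ≤ x m ^ 2 := by
      intro j _
      have := hm j
      calc x j ^ 2 = |x j| ^ 2 := (sq_abs _).symm
        _ ≤ |x m| ^ 2 := by nlinarith [abs_nonneg (x j)]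
        _ = x m ^ 2 := sq_abs _
    have hsum : (1:ℝ) ≤ (N:ℝ) * x m ^ 2 := by
      have := Finset.sum_le_card_nsmul univ (fun j => x j ^ 2) (x m ^ 2) hb
      rw [hx] at this
      simpa [Finset.card_univ, nsmul_eq_mul] using this
    apply sq_le_abs' _ _ hcpos.le
    rw [hc2]
    rw [div_le_iff₀ (by linarith)]
    have hN0 : (0:ℝ) < (N:ℝ) := by linarith
    nlinarith [sq_nonneg (x m)]
  have hpi : c ≤ |p i| := key p i hP (fun j => hi j (mem_univ j))
  have hqk : c ≤ |q k| := key q k hQ (fun j => hk j (mem_univ j))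
  by_cases hik : i ≠ k
  · exact ⟨i, k, hik, hpi, hqk⟩
  push_neg at hik
  subst hik
  -- argmaxes coincide at i
  have hErase : ∀ (x : EuclideanSpace ℝ (Fin N)),
      ∑ j ∈ univ.erase i, x j ^ 2 = (∑ j, x j ^ 2) - x i ^ 2 := by
    intro x
    have h0 := Finset.sum_erase_add univ (fun j => x j ^ 2) (mem_univ i)
    simp only [] at h0
    linarith
  have hErasePQ : ∑ j ∈ univ.erase i, p j * q j = - (p i * q i) := by
    have h0 := Finset.sum_erase_add univ (fun j => p j * q j) (mem_univ i)
    simp only [] at h0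
    rw [hPQ] at h0; linarith
  have hCS := Finset.sum_mul_sq_le_sq_mul_sq (univ.erase i) p q
  rw [hErasePQ, hErase p, hErase q, hP, hQ] at hCS
  have hsum1 : p i ^ 2 + q i ^ 2 ≤ 1 := by nlinarith [sq_nonneg (p i * q i)]
  -- erase i is nonempty
  have hEne : (univ.erase i).Nonempty := by
    rw [← Finset.card_pos, Finset.card_erase_of_mem (mem_univ i), Finset.card_univ,
      Fintype.card_fin]
    omega
  have hcard : ((univ.erase i).card : ℝ) = (N:ℝ) - 1 := by
    rw [Finset.card_erase_of_mem (mem_univ i), Finset.card_univ, Fintype.card_fin]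
    have : (1:ℕ) ≤ N := by omega
    push_cast [Nat.cast_sub this]
    ring
  -- second max on the erased set
  have key2 : ∀ (x : EuclideanSpace ℝ (Fin N)),
      (∑ j, x j ^ 2 = 1) → x i ^ 2 ≤ 1/2 → ∃ j, j ≠ i ∧ c ≤ |x j| := by
    intro x hx hxi
    obtain ⟨j, hj, hjmax⟩ := exists_max_image (univ.erase i) (fun j => |x j|) hEne
    refine ⟨j, Finset.ne_of_mem_erase hj, ?_⟩
    have hb : ∀ l ∈ univ.erase i, x l ^ 2 ≤ x j ^ 2 := by
      intro l hl
      have := hjmax l hl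
      calc x l ^ 2 = |x l| ^ 2 := (sq_abs _).symm
        _ ≤ |x j| ^ 2 := by nlinarith [abs_nonneg (x l)]
        _ = x j ^ 2 := sq_abs _
    have hsum : (1:ℝ)/2 ≤ ((N:ℝ) - 1) * x j ^ 2 := by
      have h1 := Finset.sum_le_card_nsmul (univ.erase i) (fun l => x l ^ 2) (x j ^ 2) hb
      rw [hErase x, hx] at h1
      rw [nsmul_eq_mul, hcard] at h1
      linarith
    apply sq_le_abs' _ _ hcpos.le
    rw [hc2, div_le_iff₀ (by linarith)]
    linarith [hsum]
  rcases le_or_gt (q i ^ 2) (1/2) with hcase | hcase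
  · obtain ⟨j, hji, hjc⟩ := key2 q hQ hcase
    exact ⟨i, j, fun h => hji h.symm, hpi, hjc⟩
  · have hpile : p i ^ 2 ≤ 1/2 := by linarith
    obtain ⟨j, hji, hjc⟩ := key2 p hP hpile
    exact ⟨j, i, hji, hjc, hqk⟩
end

section
/- Let α ∈ [0,1] and ε ∈ (0,1). Then there exists a universal constant C such that for almost every x, y, η, ξ ∈ ℝ^n: | |η−y|^{−n+α} − |η−x|^{−n+α} | · | |ξ−y|^{−n+α} − |ξ−x|^{−n+α} | is bounded by C times the sum of: (i) |y−η|^{−n+α−ε}(|x−ξ|^{−n+α−ε} + |y−ξ|^{−n+α−ε})|x−y|^{2ε}; (ii) (|x−η|^{−n+α−ε} + |y−η|^{−n+α−ε})|y−ξ|^{−n+α−ε}|x−y|^{2ε}; (iii) |x−η|^{−n+α}|x−ξ|^{−n+α}·χ_{|x−y| > 2|x−ξ|}·χ_{|x−y| > 2|x−η|}. -/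
open Real

private lemma bern_aux (n : ℕ) (u : ℝ) (hu0 : 0 ≤ u) (hu1 : u ≤ 1) :
    1 - u ^ n ≤ n * (1 - u) := by
  have h := one_add_mul_le_pow (a := u - 1) (by linarith) n
  have h2 : (1 + (u - 1)) ^ n = u ^ n := by ring_nf
  nlinarith

private lemma key0 (n : ℕ) (b ε m M : ℝ) (hb0 : 0 ≤ b) (hbn : b ≤ n)
    (hε0 : 0 < ε) (hε1 : ε ≤ 1) (hm : 0 < m) (hmM : m ≤ M) :
    m ^ (-b) - M ^ (-b) ≤ n * m ^ (-b - ε) * (M - m) ^ ε := by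
  have hM : 0 < M := lt_of_lt_of_le hm hmM
  set u := m / M with hu
  have hu0 : 0 < u := div_pos hm hM
  have hu1 : u ≤ 1 := (div_le_one hM).mpr hmM
  have h1 : m ^ (-b) * u ^ b = M ^ (-b) := by
    rw [hu, Real.div_rpow hm.le hM.le, div_eq_mul_inv, ← Real.rpow_neg hM.le,
      ← mul_assoc, ← Real.rpow_add hm]
    simp
  -- 1 - u^b ≤ n * (1-u)^ε
  have hub : u ^ ((n : ℝ)) ≤ u ^ b := Real.rpow_le_rpow_of_exponent_ge hu0 hu1 hbn
  have hun : u ^ ((n : ℝ)) = u ^ n := Real.rpow_natCast u n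
  have hbern : 1 - u ^ n ≤ n * (1 - u) := bern_aux n u hu0.le hu1
  have hpow : (1 - u) ≤ (1 - u) ^ ε := by
    rcases eq_or_lt_of_le hu1 with h | h
    · simp [← h, Real.zero_rpow hε0.ne']
    · have h0 : 0 < 1 - u := by linarith
      calc (1 - u) = (1 - u) ^ (1 : ℝ) := (Real.rpow_one _).symm
        _ ≤ (1 - u) ^ ε := Real.rpow_le_rpow_of_exponent_ge h0 (by linarith) hε1
  have hkey : 1 - u ^ b ≤ n * (1 - u) ^ ε := by
    have hn0 : (0 : ℝ) ≤ n := Nat.cast_nonneg n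
    nlinarith [hub, hun, hbern, hpow]
  -- now multiply by m^(-b)
  have hmb : (0 : ℝ) ≤ m ^ (-b) := Real.rpow_nonneg hm.le _
  have h2 : m ^ (-b) - M ^ (-b) ≤ m ^ (-b) * (n * (1 - u) ^ ε) := by
    have := mul_le_mul_of_nonneg_left hkey hmb
    calc m ^ (-b) - M ^ (-b) = m ^ (-b) * (1 - u ^ b) := by rw [mul_sub, mul_one, h1]
      _ ≤ m ^ (-b) * (n * (1 - u) ^ ε) := this
  refine h2.trans ?_
  -- (1-u)^ε ≤ ((M-m)/m)^ε
  have h3 : (1 - u) ≤ (M - m) / m := by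
    have : 1 - u = (M - m) / M := by rw [hu]; field_simp
    rw [this]
    gcongr
  have h4 : (1 - u) ^ ε ≤ ((M - m) / m) ^ ε :=
    Real.rpow_le_rpow (by linarith [hu1]) h3 hε0.le
  have h5 : ((M - m) / m) ^ ε = (M - m) ^ ε * m ^ (-ε) := by
    rw [Real.div_rpow (by linarith) hm.le, div_eq_mul_inv, ← Real.rpow_neg hm.le]
  have h6 : m ^ (-b) * ((M - m) ^ ε * m ^ (-ε)) = m ^ (-b - ε) * (M - m) ^ ε := by
    rw [show m ^ (-b) * ((M - m) ^ ε * m ^ (-ε)) = (m ^ (-b) * m ^ (-ε)) * (M - m) ^ ε by ring,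
      ← Real.rpow_add hm]
    ring_nf
  calc m ^ (-b) * (n * (1 - u) ^ ε) ≤ m ^ (-b) * (n * ((M - m) / m) ^ ε) := by
        have hn0 : (0 : ℝ) ≤ n := Nat.cast_nonneg n
        apply mul_le_mul_of_nonneg_left _ hmb
        exact mul_le_mul_of_nonneg_left h4 hn0
    _ = n * (m ^ (-b) * ((M - m) ^ ε * m ^ (-ε))) := by rw [h5]; ring
    _ = n * m ^ (-b - ε) * (M - m) ^ ε := by rw [h6]; ring

private lemma key (n : ℕ) (b ε r s : ℝ) (hb0 : 0 ≤ b) (hbn : b ≤ n)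
    (hε0 : 0 < ε) (hε1 : ε ≤ 1) (hr : 0 < r) (hs : 0 < s) :
    |r ^ (-b) - s ^ (-b)| ≤ n * (min r s) ^ (-b - ε) * |r - s| ^ ε := by
  have hRHS : ∀ m M : ℝ, 0 < m → m ≤ M →
      |m ^ (-b) - M ^ (-b)| ≤ n * m ^ (-b - ε) * (M - m) ^ ε := by
    intro m M hm hmM
    have hmono : M ^ (-b) ≤ m ^ (-b) :=
      Real.rpow_le_rpow_of_nonpos hm hmM (by linarith)
    rw [abs_of_nonneg (by linarith)]
    exact key0 n b ε m M hb0 hbn hε0 hε1 hm hmM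
  rcases le_total r s with h | h
  · rw [min_eq_left h, abs_sub_comm r s, abs_of_nonneg (by linarith : (0:ℝ) ≤ s - r)]
    exact hRHS r s hr h
  · rw [min_eq_right h, abs_sub_comm, abs_of_nonneg (by linarith : (0:ℝ) ≤ r - s)]
    exact hRHS s r hs h


private lemma main_real (n : ℕ) (hn : 1 ≤ n) (b ε d r1 s1 r2 s2 : ℝ)
    (hb0 : 0 ≤ b) (hbn : b ≤ n) (hε0 : 0 < ε) (hε1 : ε ≤ 1)
    (hd : 0 < d) (hr1 : 0 < r1) (hs1 : 0 < s1) (hr2 : 0 < r2) (hs2 : 0 < s2)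
    (t1 : |r1 - s1| ≤ d) (t2 : |r2 - s2| ≤ d) (t3 : d ≤ s1 + r1) (t4 : d ≤ s2 + r2) :
    |r1 ^ (-b) - s1 ^ (-b)| * |r2 ^ (-b) - s2 ^ (-b)| ≤
      ((n : ℝ) ^ 2 * 3 ^ ((n : ℝ) + 1) + 4) *
        (r1 ^ (-b - ε) * (s2 ^ (-b - ε) + r2 ^ (-b - ε)) * d ^ (2 * ε))
      + ((n : ℝ) ^ 2 * 3 ^ ((n : ℝ) + 1) + 4) *
        ((s1 ^ (-b - ε) + r1 ^ (-b - ε)) * r2 ^ (-b - ε) * d ^ (2 * ε))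
      + ((n : ℝ) ^ 2 * 3 ^ ((n : ℝ) + 1) + 4) *
        (s1 ^ (-b) * s2 ^ (-b) * (if 2 * s2 < d then 1 else 0) *
          (if 2 * s1 < d then 1 else 0)) := by
  set C : ℝ := (n : ℝ) ^ 2 * 3 ^ ((n : ℝ) + 1) + 4 with hC
  have h3pos : (0:ℝ) < 3 ^ ((n : ℝ) + 1) := Real.rpow_pos_of_pos (by norm_num) _
  have h31 : (1:ℝ) ≤ 3 ^ ((n : ℝ) + 1) := by
    calc (1:ℝ) = 3 ^ (0:ℝ) := (Real.rpow_zero 3).symm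
      _ ≤ 3 ^ ((n : ℝ) + 1) := Real.rpow_le_rpow_of_exponent_le (by norm_num) (by positivity)
  have hCpos : 0 < C := by rw [hC]; positivity
  have hKC : (n : ℝ) ^ 2 * 3 ^ ((n : ℝ) + 1) ≤ C := by rw [hC]; linarith
  have h4C : (4:ℝ) ≤ C := by
    rw [hC]
    have := mul_nonneg (sq_nonneg ((n:ℝ))) h3pos.le
    nlinarith
  have hc0 : -b - ε ≤ 0 := by linarith
  have hi2 : (0:ℝ) ≤ if 2 * s2 < d then 1 else 0 := by split_ifs <;> norm_num
  have hi1 : (0:ℝ) ≤ if 2 * s1 < d then 1 else 0 := by split_ifs <;> norm_num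
  have hT1 : 0 ≤ r1 ^ (-b - ε) * (s2 ^ (-b - ε) + r2 ^ (-b - ε)) * d ^ (2 * ε) := by positivity
  have hT2 : 0 ≤ (s1 ^ (-b - ε) + r1 ^ (-b - ε)) * r2 ^ (-b - ε) * d ^ (2 * ε) := by positivity
  have hT3 : 0 ≤ s1 ^ (-b) * s2 ^ (-b) * (if 2 * s2 < d then 1 else 0) *
      (if 2 * s1 < d then 1 else 0) := by
    refine mul_nonneg (mul_nonneg (mul_nonneg ?_ ?_) hi2) hi1 <;> exact Real.rpow_nonneg (by positivity) _
  have d2 : d ^ ε * d ^ ε = d ^ (2 * ε) := by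
    rw [← Real.rpow_add hd]; ring_nf
  -- general bound
  have Fgen : ∀ r s : ℝ, 0 < r → 0 < s → |r - s| ≤ d →
      |r ^ (-b) - s ^ (-b)| ≤ (n : ℝ) * ((s ^ (-b - ε) + r ^ (-b - ε))) * d ^ ε := by
    intro r s hr hs ht
    refine (key n b ε r s hb0 hbn hε0 hε1 hr hs).trans ?_
    have hmin : (min r s) ^ (-b - ε) ≤ s ^ (-b - ε) + r ^ (-b - ε) := by
      rcases min_cases r s with ⟨h, _⟩ | ⟨h, _⟩ <;> rw [h] <;>
        [linarith [Real.rpow_nonneg hs.le (-b - ε)]; linarith [Real.rpow_nonneg hr.le (-b - ε)]]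
    have hde : |r - s| ^ ε ≤ d ^ ε := Real.rpow_le_rpow (abs_nonneg _) ht hε0.le
    have hn0 : (0:ℝ) ≤ n := Nat.cast_nonneg n
    calc (n:ℝ) * (min r s) ^ (-b - ε) * |r - s| ^ ε
        ≤ (n:ℝ) * (min r s) ^ (-b - ε) * d ^ ε := by
          apply mul_le_mul_of_nonneg_left hde
          exact mul_nonneg hn0 (Real.rpow_nonneg (le_min hr.le hs.le) _)
      _ ≤ (n:ℝ) * (s ^ (-b - ε) + r ^ (-b - ε)) * d ^ ε := by
          apply mul_le_mul_of_nonneg_right _ (Real.rpow_nonneg hd.le ε)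
          exact mul_le_mul_of_nonneg_left hmin hn0
  -- special bound when d ≤ 2 s
  have Fsp : ∀ r s : ℝ, 0 < r → 0 < s → |r - s| ≤ d → d ≤ 2 * s →
      |r ^ (-b) - s ^ (-b)| ≤ (n : ℝ) * (3 ^ ((n : ℝ) + 1) * r ^ (-b - ε)) * d ^ ε := by
    intro r s hr hs ht hds
    refine (key n b ε r s hb0 hbn hε0 hε1 hr hs).trans ?_
    have hmin : (min r s) ^ (-b - ε) ≤ 3 ^ ((n : ℝ) + 1) * r ^ (-b - ε) := by
      rcases min_cases r s with ⟨h, hle⟩ | ⟨h, hle⟩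
      · rw [h]
        nlinarith [Real.rpow_nonneg hr.le (-b - ε)]
      · rw [h]
        have hr3 : r / 3 ≤ s := by
          have h1 : r - s ≤ |r - s| := le_abs_self _
          linarith
        have h5 : s ^ (-b - ε) ≤ (r / 3) ^ (-b - ε) :=
          Real.rpow_le_rpow_of_nonpos (by positivity) hr3 hc0
        have h6 : (r / 3) ^ (-b - ε) = r ^ (-b - ε) * 3 ^ (b + ε) := by
          rw [Real.div_rpow hr.le (by norm_num), div_eq_mul_inv,
            ← Real.rpow_neg (by norm_num : (0:ℝ) ≤ 3)]
          ring_nf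
        have h7 : (3:ℝ) ^ (b + ε) ≤ 3 ^ ((n : ℝ) + 1) :=
          Real.rpow_le_rpow_of_exponent_le (by norm_num) (by linarith)
        calc s ^ (-b - ε) ≤ r ^ (-b - ε) * 3 ^ (b + ε) := by rw [← h6]; exact h5
          _ ≤ r ^ (-b - ε) * 3 ^ ((n : ℝ) + 1) :=
              mul_le_mul_of_nonneg_left h7 (Real.rpow_nonneg hr.le _)
          _ = 3 ^ ((n : ℝ) + 1) * r ^ (-b - ε) := mul_comm _ _
    have hde : |r - s| ^ ε ≤ d ^ ε := Real.rpow_le_rpow (abs_nonneg _) ht hε0.le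
    have hn0 : (0:ℝ) ≤ n := Nat.cast_nonneg n
    calc (n:ℝ) * (min r s) ^ (-b - ε) * |r - s| ^ ε
        ≤ (n:ℝ) * (min r s) ^ (-b - ε) * d ^ ε := by
          apply mul_le_mul_of_nonneg_left hde
          exact mul_nonneg hn0 (Real.rpow_nonneg (le_min hr.le hs.le) _)
      _ ≤ (n:ℝ) * (3 ^ ((n : ℝ) + 1) * r ^ (-b - ε)) * d ^ ε := by
          apply mul_le_mul_of_nonneg_right _ (Real.rpow_nonneg hd.le ε)
          exact mul_le_mul_of_nonneg_left hmin hn0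
  by_cases h1 : d ≤ 2 * s1
  · -- covered by first term
    have F := Fsp r1 s1 hr1 hs1 t1 h1
    have G := Fgen r2 s2 hr2 hs2 t2
    have step : |r1 ^ (-b) - s1 ^ (-b)| * |r2 ^ (-b) - s2 ^ (-b)| ≤
        (n : ℝ) ^ 2 * 3 ^ ((n : ℝ) + 1) *
          (r1 ^ (-b - ε) * (s2 ^ (-b - ε) + r2 ^ (-b - ε)) * d ^ (2 * ε)) := by
      calc |r1 ^ (-b) - s1 ^ (-b)| * |r2 ^ (-b) - s2 ^ (-b)|
          ≤ ((n : ℝ) * (3 ^ ((n : ℝ) + 1) * r1 ^ (-b - ε)) * d ^ ε) *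
            ((n : ℝ) * ((s2 ^ (-b - ε) + r2 ^ (-b - ε))) * d ^ ε) := by
            refine mul_le_mul F G (abs_nonneg _) (by positivity)
        _ = (n : ℝ) ^ 2 * 3 ^ ((n : ℝ) + 1) *
            (r1 ^ (-b - ε) * (s2 ^ (-b - ε) + r2 ^ (-b - ε)) * (d ^ ε * d ^ ε)) := by ring
        _ = _ := by rw [d2]
    have h2' := mul_le_mul_of_nonneg_right hKC hT1
    linarith [step, h2', mul_nonneg hCpos.le hT2, mul_nonneg hCpos.le hT3]
  · by_cases h2 : d ≤ 2 * s2
    · -- covered by second term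
      have F := Fgen r1 s1 hr1 hs1 t1
      have G := Fsp r2 s2 hr2 hs2 t2 h2
      have step : |r1 ^ (-b) - s1 ^ (-b)| * |r2 ^ (-b) - s2 ^ (-b)| ≤
          (n : ℝ) ^ 2 * 3 ^ ((n : ℝ) + 1) *
            ((s1 ^ (-b - ε) + r1 ^ (-b - ε)) * r2 ^ (-b - ε) * d ^ (2 * ε)) := by
        calc |r1 ^ (-b) - s1 ^ (-b)| * |r2 ^ (-b) - s2 ^ (-b)|
            ≤ ((n : ℝ) * ((s1 ^ (-b - ε) + r1 ^ (-b - ε))) * d ^ ε) *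
              ((n : ℝ) * (3 ^ ((n : ℝ) + 1) * r2 ^ (-b - ε)) * d ^ ε) := by
              refine mul_le_mul F G (abs_nonneg _) (by positivity)
          _ = (n : ℝ) ^ 2 * 3 ^ ((n : ℝ) + 1) *
              ((s1 ^ (-b - ε) + r1 ^ (-b - ε)) * r2 ^ (-b - ε) * (d ^ ε * d ^ ε)) := by ring
          _ = _ := by rw [d2]
      have h2' := mul_le_mul_of_nonneg_right hKC hT2
      linarith [step, h2', mul_nonneg hCpos.le hT1, mul_nonneg hCpos.le hT3]
    · -- covered by third term
      push_neg at h1 h2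
      rw [if_pos h2, if_pos h1]
      have hs1r1 : s1 ≤ r1 := by linarith
      have hs2r2 : s2 ≤ r2 := by linarith
      have hF1 : r1 ^ (-b) ≤ s1 ^ (-b) :=
        Real.rpow_le_rpow_of_nonpos hs1 hs1r1 (by linarith)
      have hF2 : r2 ^ (-b) ≤ s2 ^ (-b) :=
        Real.rpow_le_rpow_of_nonpos hs2 hs2r2 (by linarith)
      have hF1' : 0 ≤ r1 ^ (-b) := Real.rpow_nonneg hr1.le _
      have hF2' : 0 ≤ r2 ^ (-b) := Real.rpow_nonneg hr2.le _
      have hFb : |r1 ^ (-b) - s1 ^ (-b)| ≤ 2 * s1 ^ (-b) :=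
        abs_le.mpr ⟨by linarith, by linarith⟩
      have hGb : |r2 ^ (-b) - s2 ^ (-b)| ≤ 2 * s2 ^ (-b) :=
        abs_le.mpr ⟨by linarith, by linarith⟩
      have hs1b : 0 ≤ s1 ^ (-b) := Real.rpow_nonneg hs1.le _
      have hs2b : 0 ≤ s2 ^ (-b) := Real.rpow_nonneg hs2.le _
      have step : |r1 ^ (-b) - s1 ^ (-b)| * |r2 ^ (-b) - s2 ^ (-b)| ≤
          4 * (s1 ^ (-b) * s2 ^ (-b) * 1 * 1) := by
        calc |r1 ^ (-b) - s1 ^ (-b)| * |r2 ^ (-b) - s2 ^ (-b)|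
            ≤ (2 * s1 ^ (-b)) * (2 * s2 ^ (-b)) :=
              mul_le_mul hFb hGb (abs_nonneg _) (by linarith)
          _ = 4 * (s1 ^ (-b) * s2 ^ (-b) * 1 * 1) := by ring
      have h2' := mul_le_mul_of_nonneg_right h4C
        (show (0:ℝ) ≤ s1 ^ (-b) * s2 ^ (-b) * 1 * 1 by positivity)
      linarith [step, h2', mul_nonneg hCpos.le hT1, mul_nonneg hCpos.le hT2]

theorem stmt6 (n : ℕ) (hn : 1 ≤ n) :
    ∃ C : ℝ, 0 < C ∧
      ∀ (α : ℝ), α ∈ Set.Icc (0 : ℝ) 1 →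
      ∀ (ε : ℝ), ε ∈ Set.Ioo (0 : ℝ) 1 →
      ∀ (x y η ξ : EuclideanSpace ℝ (Fin n)),
        x ≠ y → x ≠ η → x ≠ ξ → y ≠ η → y ≠ ξ →
        |‖η - y‖ ^ (-(n : ℝ) + α) - ‖η - x‖ ^ (-(n : ℝ) + α)| *
          |‖ξ - y‖ ^ (-(n : ℝ) + α) - ‖ξ - x‖ ^ (-(n : ℝ) + α)| ≤
        C * (‖y - η‖ ^ (-(n : ℝ) + α - ε) *
              (‖x - ξ‖ ^ (-(n : ℝ) + α - ε) + ‖y - ξ‖ ^ (-(n : ℝ) + α - ε)) *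
              ‖x - y‖ ^ (2 * ε))
        + C * ((‖x - η‖ ^ (-(n : ℝ) + α - ε) + ‖y - η‖ ^ (-(n : ℝ) + α - ε)) *
              ‖y - ξ‖ ^ (-(n : ℝ) + α - ε) * ‖x - y‖ ^ (2 * ε))
        + C * (‖x - η‖ ^ (-(n : ℝ) + α) * ‖x - ξ‖ ^ (-(n : ℝ) + α) *
              (if 2 * ‖x - ξ‖ < ‖x - y‖ then 1 else 0) *
              (if 2 * ‖x - η‖ < ‖x - y‖ then 1 else 0)) := by
  refine ⟨(n : ℝ) ^ 2 * 3 ^ ((n : ℝ) + 1) + 4, by positivity, ?_⟩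
  intro α hα ε hε x y η ξ hxy hxη hxξ hyη hyξ
  rw [Set.mem_Icc] at hα
  rw [Set.mem_Ioo] at hε
  obtain ⟨hα0, hα1⟩ := hα
  obtain ⟨hε0, hε1⟩ := hε
  have hn1 : (1:ℝ) ≤ (n:ℝ) := by exact_mod_cast hn
  have hd : 0 < ‖x - y‖ := norm_sub_pos_iff.mpr hxy
  have hr1 : 0 < ‖y - η‖ := norm_sub_pos_iff.mpr hyη
  have hs1 : 0 < ‖x - η‖ := norm_sub_pos_iff.mpr hxη
  have hr2 : 0 < ‖y - ξ‖ := norm_sub_pos_iff.mpr hyξ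
  have hs2 : 0 < ‖x - ξ‖ := norm_sub_pos_iff.mpr hxξ
  have t1 : |‖y - η‖ - ‖x - η‖| ≤ ‖x - y‖ := by
    have h := abs_norm_sub_norm_le (y - η) (x - η)
    rwa [sub_sub_sub_cancel_right, norm_sub_rev y x] at h
  have t2 : |‖y - ξ‖ - ‖x - ξ‖| ≤ ‖x - y‖ := by
    have h := abs_norm_sub_norm_le (y - ξ) (x - ξ)
    rwa [sub_sub_sub_cancel_right, norm_sub_rev y x] at h
  have t3 : ‖x - y‖ ≤ ‖x - η‖ + ‖y - η‖ := by
    have h := dist_triangle x η y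
    simp only [dist_eq_norm] at h
    rwa [norm_sub_rev η y] at h
  have t4 : ‖x - y‖ ≤ ‖x - ξ‖ + ‖y - ξ‖ := by
    have h := dist_triangle x ξ y
    simp only [dist_eq_norm] at h
    rwa [norm_sub_rev ξ y] at h
  rw [norm_sub_rev η y, norm_sub_rev η x, norm_sub_rev ξ y, norm_sub_rev ξ x,
    show -(n : ℝ) + α = -((n:ℝ) - α) by ring]
  exact main_real n hn ((n:ℝ) - α) ε ‖x - y‖ ‖y - η‖ ‖x - η‖ ‖y - ξ‖ ‖x - ξ‖
    (by linarith) (by linarith) hε0 hε1.le hd hr1 hs1 hr2 hs2 t1 t2 t3 t4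
end

section
/- Let α ∈ (0,1) and u, v Lipschitz, bounded functions on ℝ^n. Then the three-term commutator H_α(u,v)(x) = (−Δ)^{α/2}(uv)(x) − u(x)(−Δ)^{α/2}v(x) − v(x)(−Δ)^{α/2}u(x) satisfies the pointwise bound |H_α(u,v)(x)| ≤ C ‖∇u‖_∞^{α/2}‖u‖_∞^{1−α/2} · ‖∇v‖_∞^{α/2}‖v‖_∞^{1−α/2} for a constant C depending only on n and α. -/
open MeasureTheory Set Metric
open scoped ENNReal

/-- Fractional Laplacian of order `α ∈ (0,1)` in singular integral form, with
normalization constant `c`. -/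
noncomputable def fracLapSI (n : ℕ) (c α : ℝ)
    (f : EuclideanSpace ℝ (Fin n) → ℝ) (x : EuclideanSpace ℝ (Fin n)) : ℝ :=
  c * ∫ y, (f x - f y) / ‖x - y‖ ^ ((n : ℝ) + α)

/-- The three-term commutator `H_α(u,v)`. -/
noncomputable def Hcomm (n : ℕ) (c α : ℝ)
    (u v : EuclideanSpace ℝ (Fin n) → ℝ) (x : EuclideanSpace ℝ (Fin n)) : ℝ :=
  fracLapSI n c α (fun y => u y * v y) x
    - u x * fracLapSI n c α v x - v x * fracLapSI n c α u x

namespace Stmt12Aux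

local notation "dim" => Module.finrank ℝ

lemma lintegral_fun_norm_addHaar' {E' : Type*} [NormedAddCommGroup E'] [NormedSpace ℝ E']
    [MeasurableSpace E'] [BorelSpace E'] [FiniteDimensional ℝ E'] [Nontrivial E']
    (μ : Measure E') [μ.IsAddHaarMeasure] (f : ℝ → ℝ≥0∞) (hf : Measurable f) :
    ∫⁻ x, f ‖x‖ ∂μ
      = μ.toSphere univ * ∫⁻ r in Ioi (0:ℝ), ENNReal.ofReal (r ^ (dim E' - 1)) * f r := by
  calc
    ∫⁻ x, f ‖x‖ ∂μ = ∫⁻ x : ({(0:E')}ᶜ : Set E'), f ‖x.1‖ ∂(μ.comap (↑)) := by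
      rw [lintegral_subtype_comap (measurableSet_singleton _).compl fun x => f ‖x‖,
        MeasureTheory.restrict_compl_singleton]
    _ = ∫⁻ p : sphere (0:E') 1 × Ioi (0:ℝ), f p.2
          ∂(μ.toSphere.prod (.volumeIoiPow (dim E' - 1))) := by
      refine Eq.trans ?_ ((μ.measurePreserving_homeomorphUnitSphereProd).lintegral_comp
        (by fun_prop : Measurable (f ∘ Subtype.val ∘ Prod.snd)))
      congr 1; funext x; simp
    _ = μ.toSphere univ * ∫⁻ r : Ioi (0:ℝ), f r ∂(Measure.volumeIoiPow (dim E' - 1)) := by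
      rw [lintegral_prod _
        (by fun_prop : Measurable (fun p : sphere (0:E') 1 × Ioi (0:ℝ) => f p.2)).aemeasurable]
      simp [lintegral_const, mul_comm]
    _ = _ := by
      rw [Measure.volumeIoiPow,
        lintegral_withDensity_eq_lintegral_mul _ (by fun_prop) (by fun_prop)]
      congr 1
      rw [← lintegral_subtype_comap measurableSet_Ioi]
      rfl

lemma oneD {n : ℕ} (hn : 1 ≤ n) {α : ℝ} (hα : α ∈ Set.Ioo (0:ℝ) 1)
    {β a b R : ℝ} (hβ : α < β) (ha : 0 ≤ a) (hb : 0 ≤ b) (hR : 0 < R) :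
    ∫⁻ r in Ioi (0:ℝ), ENNReal.ofReal (r ^ (n - 1)) *
        ENNReal.ofReal (min (a * r ^ β) b * r ^ (-((n:ℝ) + α)))
      ≤ ENNReal.ofReal (a * R ^ (β - α) / (β - α)) + ENNReal.ofReal (b * R ^ (-α) / α) := by
  obtain ⟨hα0, hα1⟩ := hα
  have hβα : (0:ℝ) < β - α := by linarith
  have key1 : ∀ r ∈ Ioc (0:ℝ) R, ENNReal.ofReal (r ^ (n - 1)) *
      ENNReal.ofReal (min (a * r ^ β) b * r ^ (-((n:ℝ) + α)))
        ≤ ENNReal.ofReal (a * r ^ (β - 1 - α)) := by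
    intro r hr
    rw [← ENNReal.ofReal_mul (pow_nonneg hr.1.le _)]
    apply ENNReal.ofReal_le_ofReal
    calc r ^ (n - 1) * (min (a * r ^ β) b * r ^ (-((n:ℝ) + α)))
        ≤ r ^ (n - 1) * ((a * r ^ β) * r ^ (-((n:ℝ) + α))) := by
          have h1 : (0:ℝ) ≤ r ^ (n-1) := pow_nonneg hr.1.le _
          have h2 : (0:ℝ) ≤ r ^ (-((n:ℝ) + α)) := Real.rpow_nonneg hr.1.le _
          exact mul_le_mul_of_nonneg_left
            (mul_le_mul_of_nonneg_right (min_le_left _ _) h2) h1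
      _ = a * r ^ (((n - 1 : ℕ):ℝ) + (β + -((n:ℝ) + α))) := by
          rw [Real.rpow_add hr.1, Real.rpow_add hr.1, Real.rpow_natCast]; ring
      _ = a * r ^ (β - 1 - α) := by
          congr 1
          push_cast [Nat.cast_sub hn]
          ring_nf
  have key2 : ∀ r ∈ Ioi R, ENNReal.ofReal (r ^ (n - 1)) *
      ENNReal.ofReal (min (a * r ^ β) b * r ^ (-((n:ℝ) + α)))
        ≤ ENNReal.ofReal (b * r ^ (-1 - α)) := by
    intro r hr
    have hr0 : (0:ℝ) < r := hR.trans hr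
    rw [← ENNReal.ofReal_mul (by positivity)]
    apply ENNReal.ofReal_le_ofReal
    calc r ^ (n - 1) * (min (a * r ^ β) b * r ^ (-((n:ℝ) + α)))
        ≤ r ^ (n - 1) * (b * r ^ (-((n:ℝ) + α))) := by
          have h1 : (0:ℝ) ≤ r ^ (n-1) := by positivity
          have h2 : (0:ℝ) ≤ r ^ (-((n:ℝ) + α)) := Real.rpow_nonneg hr0.le _
          exact mul_le_mul_of_nonneg_left
            (mul_le_mul_of_nonneg_right (min_le_right _ _) h2) h1
      _ = b * r ^ (((n - 1 : ℕ):ℝ) + -((n:ℝ) + α)) := by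
          rw [Real.rpow_add hr0, Real.rpow_natCast]; ring
      _ = b * r ^ (-1 - α) := by
          congr 1
          push_cast [Nat.cast_sub hn]
          ring_nf
  have int1 : IntegrableOn (fun r : ℝ => a * r ^ (β - 1 - α)) (Ioc 0 R) := by
    exact ((intervalIntegral.intervalIntegrable_rpow'
      (by linarith : (-1:ℝ) < β - 1 - α)).1).const_mul a
  have int2 : IntegrableOn (fun r : ℝ => b * r ^ (-1 - α)) (Ioi R) := by
    exact (integrableOn_Ioi_rpow_of_lt (by linarith : (-1 - α) < -1) hR).const_mul b
  calc ∫⁻ r in Ioi (0:ℝ), ENNReal.ofReal (r ^ (n - 1)) *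
        ENNReal.ofReal (min (a * r ^ β) b * r ^ (-((n:ℝ) + α)))
      ≤ ∫⁻ r in Ioc (0:ℝ) R ∪ Ioi R, ENNReal.ofReal (r ^ (n - 1)) *
        ENNReal.ofReal (min (a * r ^ β) b * r ^ (-((n:ℝ) + α))) :=
        lintegral_mono_set Ioi_subset_Ioc_union_Ioi
    _ ≤ (∫⁻ r in Ioc (0:ℝ) R, ENNReal.ofReal (r ^ (n - 1)) *
          ENNReal.ofReal (min (a * r ^ β) b * r ^ (-((n:ℝ) + α))))
        + ∫⁻ r in Ioi R, ENNReal.ofReal (r ^ (n - 1)) *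
          ENNReal.ofReal (min (a * r ^ β) b * r ^ (-((n:ℝ) + α))) :=
        lintegral_union_le _ _ _
    _ ≤ (∫⁻ r in Ioc (0:ℝ) R, ENNReal.ofReal (a * r ^ (β - 1 - α)))
        + ∫⁻ r in Ioi R, ENNReal.ofReal (b * r ^ (-1 - α)) := by
        exact add_le_add (setLIntegral_mono' measurableSet_Ioc key1)
          (setLIntegral_mono' measurableSet_Ioi key2)
    _ ≤ ENNReal.ofReal (a * R ^ (β - α) / (β - α)) + ENNReal.ofReal (b * R ^ (-α) / α) := by
        gcongr
        · rw [← ofReal_integral_eq_lintegral_ofReal int1 ?_]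
          · apply ENNReal.ofReal_le_ofReal
            rw [MeasureTheory.integral_const_mul, ← intervalIntegral.integral_of_le hR.le,
              integral_rpow (Or.inl (by linarith : (-1:ℝ) < β - 1 - α))]
            have he : β - 1 - α + 1 = β - α := by ring
            rw [he, Real.zero_rpow (ne_of_gt hβα), sub_zero, mul_div_assoc]
          · filter_upwards [ae_restrict_mem measurableSet_Ioc] with r hr
            exact mul_nonneg ha (Real.rpow_nonneg hr.1.le _)
        · rw [← ofReal_integral_eq_lintegral_ofReal int2 ?_]
          · apply ENNReal.ofReal_le_ofReal
            rw [MeasureTheory.integral_const_mul,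
              integral_Ioi_rpow_of_lt (by linarith : (-1 - α) < -1) hR]
            have he : -1 - α + 1 = -α := by ring
            rw [he]
            exact le_of_eq (by ring)
          · filter_upwards [ae_restrict_mem measurableSet_Ioi] with r hr
            exact mul_nonneg hb (Real.rpow_nonneg (hR.trans hr).le _)

lemma master {n : ℕ} (hn : 1 ≤ n) {α : ℝ} (hα : α ∈ Set.Ioo (0:ℝ) 1) {β a b R : ℝ}
    (hβ : α < β) (ha : 0 ≤ a) (hb : 0 ≤ b) (hR : 0 < R) (x : EuclideanSpace ℝ (Fin n)) :
    ∫⁻ y : EuclideanSpace ℝ (Fin n),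
        ENNReal.ofReal (min (a * ‖x - y‖ ^ β) b * ‖x - y‖ ^ (-((n:ℝ) + α)))
      ≤ (volume : Measure (EuclideanSpace ℝ (Fin n))).toSphere Set.univ *
        (ENNReal.ofReal (a * R ^ (β - α) / (β - α)) + ENNReal.ofReal (b * R ^ (-α) / α)) := by
  haveI : Nontrivial (EuclideanSpace ℝ (Fin n)) := by
    apply Module.nontrivial_of_finrank_pos (R := ℝ)
    · rw [finrank_euclideanSpace_fin]; omega
  have hmeas : Measurable
      (fun r : ℝ => ENNReal.ofReal (min (a * r ^ β) b * r ^ (-((n:ℝ) + α)))) := by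
    fun_prop
  have htrans := (Measure.measurePreserving_sub_left
      (volume : Measure (EuclideanSpace ℝ (Fin n))) x).lintegral_comp
    (f := fun z : EuclideanSpace ℝ (Fin n) =>
      ENNReal.ofReal (min (a * ‖z‖ ^ β) b * ‖z‖ ^ (-((n:ℝ) + α)))) (by fun_prop)
  rw [show (fun y : EuclideanSpace ℝ (Fin n) =>
      ENNReal.ofReal (min (a * ‖x - y‖ ^ β) b * ‖x - y‖ ^ (-((n:ℝ) + α))))
    = (fun y => ENNReal.ofReal (min (a * ‖x - y‖ ^ β) b * ‖x - y‖ ^ (-((n:ℝ) + α)))) from rfl,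
    htrans]
  rw [lintegral_fun_norm_addHaar' (volume : Measure (EuclideanSpace ℝ (Fin n)))
    (fun r => ENNReal.ofReal (min (a * r ^ β) b * r ^ (-((n:ℝ) + α)))) hmeas,
    finrank_euclideanSpace_fin]
  exact mul_le_mul_right (oneD hn hα hβ ha hb hR) _

lemma ptws1 {n : ℕ} {α : ℝ} {x y : EuclideanSpace ℝ (Fin n)} {A K M : ℝ}
    (hb : |A| ≤ min (K * ‖x - y‖) M) :
    ENNReal.ofReal ‖A / ‖x - y‖ ^ ((n:ℝ) + α)‖
      ≤ ENNReal.ofReal (min (K * ‖x - y‖ ^ (1:ℝ)) M * ‖x - y‖ ^ (-((n:ℝ) + α))) := by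
  apply ENNReal.ofReal_le_ofReal
  rw [Real.norm_eq_abs, abs_div, abs_of_nonneg (Real.rpow_nonneg (norm_nonneg _) _),
    div_eq_mul_inv, ← Real.rpow_neg (norm_nonneg _), Real.rpow_one]
  exact mul_le_mul_of_nonneg_right hb (Real.rpow_nonneg (norm_nonneg _) _)

lemma integrable_kernel {n : ℕ} (hn : 1 ≤ n) {α : ℝ} (hα : α ∈ Set.Ioo (0:ℝ) 1)
    {f : EuclideanSpace ℝ (Fin n) → ℝ} (hf : Continuous f) {K M : ℝ} (hK : 0 ≤ K) (hM : 0 ≤ M)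
    (x : EuclideanSpace ℝ (Fin n)) (hb : ∀ y, |f x - f y| ≤ min (K * ‖x - y‖) M) :
    Integrable (fun y => (f x - f y) / ‖x - y‖ ^ ((n:ℝ) + α)) := by
  constructor
  · apply Measurable.aestronglyMeasurable
    fun_prop
  · rw [hasFiniteIntegral_iff_norm]
    calc ∫⁻ y, ENNReal.ofReal ‖(f x - f y) / ‖x - y‖ ^ ((n:ℝ) + α)‖
        ≤ ∫⁻ y, ENNReal.ofReal
            (min (K * ‖x - y‖ ^ (1:ℝ)) M * ‖x - y‖ ^ (-((n:ℝ) + α))) :=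
          lintegral_mono fun y => ptws1 (hb y)
      _ ≤ (volume : Measure (EuclideanSpace ℝ (Fin n))).toSphere Set.univ *
            (ENNReal.ofReal (K * 1 ^ ((1:ℝ) - α) / (1 - α)) +
              ENNReal.ofReal (M * 1 ^ (-α) / α)) :=
          master hn hα hα.2 hK hM one_pos x
      _ < ⊤ := ENNReal.mul_lt_top (measure_lt_top _ _)
            (ENNReal.add_lt_top.mpr ⟨ENNReal.ofReal_lt_top, ENNReal.ofReal_lt_top⟩)

lemma lipschitz_diff_bound {n : ℕ} {f : EuclideanSpace ℝ (Fin n) → ℝ} {L : NNReal} {M : ℝ}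
    (hf : LipschitzWith L f) (hM : ∀ z, |f z| ≤ M) (x y : EuclideanSpace ℝ (Fin n)) :
    |f x - f y| ≤ min ((L:ℝ) * ‖x - y‖) (2 * M) := by
  refine le_min ?_ ?_
  · have := hf.dist_le_mul x y
    rwa [Real.dist_eq, dist_eq_norm] at this
  · calc |f x - f y| ≤ |f x| + |f y| := abs_sub _ _
      _ ≤ 2 * M := by have h1 := hM x; have h2 := hM y; linarith

end Stmt12Aux


lemma identity (n : ℕ) (c α : ℝ) (u v : EuclideanSpace ℝ (Fin n) → ℝ)
    (x : EuclideanSpace ℝ (Fin n))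
    (hu : Integrable (fun y => (u x - u y) / ‖x - y‖ ^ ((n:ℝ) + α)))
    (hv : Integrable (fun y => (v x - v y) / ‖x - y‖ ^ ((n:ℝ) + α)))
    (huv : Integrable (fun y => (u x * v x - u y * v y) / ‖x - y‖ ^ ((n:ℝ) + α))) :
    Hcomm n c α u v x
      = -c * ∫ y, ((u x - u y) * (v x - v y)) / ‖x - y‖ ^ ((n:ℝ) + α) := by
  simp only [Hcomm, fracLapSI]
  rw [show u x * (c * ∫ y, (v x - v y) / ‖x - y‖ ^ ((n:ℝ) + α))
      = c * (u x * ∫ y, (v x - v y) / ‖x - y‖ ^ ((n:ℝ) + α)) by ring,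
    show v x * (c * ∫ y, (u x - u y) / ‖x - y‖ ^ ((n:ℝ) + α))
      = c * (v x * ∫ y, (u x - u y) / ‖x - y‖ ^ ((n:ℝ) + α)) by ring,
    ← integral_const_mul (u x), ← integral_const_mul (v x)]
  have hpt : (fun y => (u x * v x - u y * v y) / ‖x - y‖ ^ ((n:ℝ) + α)
        - u x * ((v x - v y) / ‖x - y‖ ^ ((n:ℝ) + α))
        - v x * ((u x - u y) / ‖x - y‖ ^ ((n:ℝ) + α)))
      = fun y => -(((u x - u y) * (v x - v y)) / ‖x - y‖ ^ ((n:ℝ) + α)) := by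
    funext y
    rw [← mul_div_assoc, ← mul_div_assoc, div_sub_div_same, div_sub_div_same, ← neg_div]
    congr 1
    ring
  have key : (-∫ y, ((u x - u y) * (v x - v y)) / ‖x - y‖ ^ ((n:ℝ) + α))
      = (∫ y, (u x * v x - u y * v y) / ‖x - y‖ ^ ((n:ℝ) + α))
      - (∫ y, u x * ((v x - v y) / ‖x - y‖ ^ ((n:ℝ) + α)))
      - (∫ y, v x * ((u x - u y) / ‖x - y‖ ^ ((n:ℝ) + α))) := by
    calc (-∫ y, ((u x - u y) * (v x - v y)) / ‖x - y‖ ^ ((n:ℝ) + α))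
        = ∫ y, -(((u x - u y) * (v x - v y)) / ‖x - y‖ ^ ((n:ℝ) + α)) := (integral_neg _).symm
      _ = ∫ y, ((u x * v x - u y * v y) / ‖x - y‖ ^ ((n:ℝ) + α)
            - u x * ((v x - v y) / ‖x - y‖ ^ ((n:ℝ) + α))
            - v x * ((u x - u y) / ‖x - y‖ ^ ((n:ℝ) + α))) := by rw [← hpt]
      _ = _ := by
          exact (integral_sub (huv.sub (hv.const_mul (u x))) (hu.const_mul (v x))).trans
            (by simp only [Pi.sub_apply]; rw [integral_sub huv (hv.const_mul (u x))])
  linear_combination -c * key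

theorem stmt12 (n : ℕ) (hn : 1 ≤ n) (α : ℝ) (hα : α ∈ Set.Ioo (0 : ℝ) 1)
    (c : ℝ) (hc : 0 < c) :
    ∃ C : ℝ, 0 < C ∧
      ∀ (u v : EuclideanSpace ℝ (Fin n) → ℝ) (Lu Lv : NNReal) (Mu Mv : ℝ),
        LipschitzWith Lu u → LipschitzWith Lv v →
        (∀ x, |u x| ≤ Mu) → (∀ x, |v x| ≤ Mv) →
        ∀ x, |Hcomm n c α u v x| ≤
          C * ((Lu : ℝ) ^ (α / 2) * Mu ^ (1 - α / 2)) *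
            ((Lv : ℝ) ^ (α / 2) * Mv ^ (1 - α / 2)) := by
  have hα0 : (0:ℝ) < α := hα.1
  have hα1 : α < 1 := hα.2
  have h2α : (0:ℝ) < 2 - α := by linarith
  set S := (volume : Measure (EuclideanSpace ℝ (Fin n))).toSphere Set.univ with hSdef
  have hSne : S ≠ ⊤ := measure_ne_top _ _
  set K0 := S.toReal with hK0def
  have hK0nn : 0 ≤ K0 := ENNReal.toReal_nonneg
  set K1 := 1/(2-α) + 1/α with hK1def
  have hK1 : 0 < K1 := add_pos (div_pos one_pos h2α) (div_pos one_pos hα0)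
  refine ⟨c * (K0 + 1) * K1 * 4,
    mul_pos (mul_pos (mul_pos hc (by linarith)) hK1) (by norm_num), ?_⟩
  intro u v Lu Lv Mu Mv hLu hLv hMu hMv x
  have hMu0 : 0 ≤ Mu := (abs_nonneg _).trans (hMu x)
  have hMv0 : 0 ≤ Mv := (abs_nonneg _).trans (hMv x)
  have hbu := Stmt12Aux.lipschitz_diff_bound hLu hMu x
  have hbv := Stmt12Aux.lipschitz_diff_bound hLv hMv x
  have hbuv : ∀ y, |u x * v x - u y * v y|
      ≤ min (((Lu:ℝ)*Mv + (Lv:ℝ)*Mu) * ‖x - y‖) (2*(Mu*Mv)) := by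
    intro y
    refine le_min ?_ ?_
    · have e : u x * v x - u y * v y = (u x - u y) * v x + u y * (v x - v y) := by ring
      rw [e]
      calc |(u x - u y) * v x + u y * (v x - v y)|
          ≤ |(u x - u y) * v x| + |u y * (v x - v y)| := abs_add_le _ _
        _ = |u x - u y| * |v x| + |u y| * |v x - v y| := by rw [abs_mul, abs_mul]
        _ ≤ ((Lu:ℝ) * ‖x - y‖) * Mv + Mu * ((Lv:ℝ) * ‖x - y‖) := by
            apply add_le_add
            · exact mul_le_mul ((hbu y).trans (min_le_left _ _)) (hMv x) (abs_nonneg _)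
                (by positivity)
            · exact mul_le_mul (hMu y) ((hbv y).trans (min_le_left _ _)) (abs_nonneg _) hMu0
        _ = ((Lu:ℝ)*Mv + (Lv:ℝ)*Mu) * ‖x - y‖ := by ring
    · calc |u x * v x - u y * v y| ≤ |u x * v x| + |u y * v y| := abs_sub _ _
        _ ≤ 2*(Mu*Mv) := by
            rw [abs_mul, abs_mul]
            have h1 : |u x| * |v x| ≤ Mu * Mv :=
              mul_le_mul (hMu x) (hMv x) (abs_nonneg _) hMu0
            have h2 : |u y| * |v y| ≤ Mu * Mv :=
              mul_le_mul (hMu y) (hMv y) (abs_nonneg _) hMu0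
            linarith
  have hu : Integrable (fun y => (u x - u y) / ‖x - y‖ ^ ((n:ℝ) + α)) :=
    Stmt12Aux.integrable_kernel hn hα hLu.continuous (NNReal.coe_nonneg _) (by linarith) x hbu
  have hv : Integrable (fun y => (v x - v y) / ‖x - y‖ ^ ((n:ℝ) + α)) :=
    Stmt12Aux.integrable_kernel hn hα hLv.continuous (NNReal.coe_nonneg _) (by linarith) x hbv
  have huv : Integrable (fun y => (u x * v x - u y * v y) / ‖x - y‖ ^ ((n:ℝ) + α)) :=
    Stmt12Aux.integrable_kernel hn hα (hLu.continuous.mul hLv.continuous)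
      (by positivity) (by positivity) x hbuv
  have hid := identity n c α u v x hu hv huv
  have hRHSnn : 0 ≤ ((Lu:ℝ) ^ (α / 2) * Mu ^ (1 - α / 2)) *
      ((Lv:ℝ) ^ (α / 2) * Mv ^ (1 - α / 2)) :=
    mul_nonneg (mul_nonneg (Real.rpow_nonneg (NNReal.coe_nonneg _) _)
        (Real.rpow_nonneg hMu0 _))
      (mul_nonneg (Real.rpow_nonneg (NNReal.coe_nonneg _) _) (Real.rpow_nonneg hMv0 _))
  by_cases hmain : 0 < (Lu:ℝ) * Lv ∧ 0 < Mu * Mv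
  case neg =>
    have hufac : ((Lu:ℝ) = 0 ∨ Mu = 0) → ∀ y, u x - u y = 0 := by
      rintro (h | h) y
      · have hd := hLu.dist_le_mul x y
        rw [h, zero_mul] at hd
        have := le_antisymm hd dist_nonneg
        rw [sub_eq_zero]
        exact dist_eq_zero.mp this
      · have h1 : |u x| ≤ 0 := h ▸ hMu x
        have h2 : |u y| ≤ 0 := h ▸ hMu y
        rw [abs_nonpos_iff.mp h1, abs_nonpos_iff.mp h2, sub_zero]
    have hvfac : ((Lv:ℝ) = 0 ∨ Mv = 0) → ∀ y, v x - v y = 0 := by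
      rintro (h | h) y
      · have hd := hLv.dist_le_mul x y
        rw [h, zero_mul] at hd
        have := le_antisymm hd dist_nonneg
        rw [sub_eq_zero]
        exact dist_eq_zero.mp this
      · have h1 : |v x| ≤ 0 := h ▸ hMv x
        have h2 : |v y| ≤ 0 := h ▸ hMv y
        rw [abs_nonpos_iff.mp h1, abs_nonpos_iff.mp h2, sub_zero]
    have hz : ∀ y, (u x - u y) * (v x - v y) = 0 := by
      rcases not_and_or.mp hmain with h | h
      · have : (Lu:ℝ) * Lv = 0 :=
          le_antisymm (not_lt.mp h) (mul_nonneg (NNReal.coe_nonneg _) (NNReal.coe_nonneg _))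
        rcases mul_eq_zero.mp this with h' | h'
        · exact fun y => by rw [hufac (Or.inl h') y, zero_mul]
        · exact fun y => by rw [hvfac (Or.inl h') y, mul_zero]
      · have : Mu * Mv = 0 := le_antisymm (not_lt.mp h) (mul_nonneg hMu0 hMv0)
        rcases mul_eq_zero.mp this with h' | h'
        · exact fun y => by rw [hufac (Or.inr h') y, zero_mul]
        · exact fun y => by rw [hvfac (Or.inr h') y, mul_zero]
    have hint0 : (∫ y, ((u x - u y) * (v x - v y)) / ‖x - y‖ ^ ((n:ℝ) + α)) = 0 := by
      rw [show (fun y => ((u x - u y) * (v x - v y)) / ‖x - y‖ ^ ((n:ℝ) + α))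
          = (fun _ => (0:ℝ)) from funext fun y => by rw [hz y, zero_div]]
      exact integral_zero _ _
    rw [hid, hint0, mul_zero, abs_zero]
    exact mul_nonneg (mul_nonneg
      (mul_pos (mul_pos (mul_pos hc (by linarith)) hK1) (by norm_num)).le
      (mul_nonneg (Real.rpow_nonneg (NNReal.coe_nonneg _) _) (Real.rpow_nonneg hMu0 _)))
      (mul_nonneg (Real.rpow_nonneg (NNReal.coe_nonneg _) _) (Real.rpow_nonneg hMv0 _))
  case pos =>
    obtain ⟨haL, hbM⟩ := hmain
    set a := (Lu:ℝ) * Lv with hadef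
    set b := 4*(Mu*Mv) with hbdef
    have ha : 0 < a := haL
    have hb : 0 < b := by rw [hbdef]; linarith
    set R := (b/a) ^ ((1:ℝ)/2) with hRdef
    have hR : 0 < R := Real.rpow_pos_of_pos (div_pos hb ha) _
    set t := a^(α/2) * b^(1-α/2) with htdef
    have ht0 : 0 ≤ t := mul_nonneg (Real.rpow_nonneg ha.le _) (Real.rpow_nonneg hb.le _)
    have hRs : ∀ s : ℝ, R ^ s = b ^ (s/2) / a ^ (s/2) := by
      intro s
      rw [hRdef, ← Real.rpow_mul (div_pos hb ha).le, Real.div_rpow hb.le ha.le,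
        show (1:ℝ)/2 * s = s/2 by ring]
    have h1 : a * R ^ ((2:ℝ) - α) = t := by
      rw [hRs, show ((2:ℝ) - α)/2 = 1 - α/2 by ring]
      have ea : a / a^(1-α/2) = a^(α/2) := by
        nth_rewrite 1 [← Real.rpow_one a]
        rw [← Real.rpow_sub ha, show (1:ℝ) - (1-α/2) = α/2 by ring]
      calc a * (b^(1-α/2)/a^(1-α/2)) = (a / a^(1-α/2)) * b^(1-α/2) := by ring
        _ = t := by rw [ea]
    have h2 : b * R ^ (-α) = t := by
      rw [hRs, show -α/2 = -(α/2) by ring]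
      have eb : b * b^(-(α/2)) = b^(1-α/2) := by
        nth_rewrite 1 [← Real.rpow_one b]
        rw [← Real.rpow_add hb, show (1:ℝ) + -(α/2) = 1 - α/2 by ring]
      have ea : (a ^ (-(α/2)))⁻¹ = a^(α/2) := by
        rw [← Real.rpow_neg ha.le, neg_neg]
      calc b * (b^(-(α/2))/a^(-(α/2))) = (b * b^(-(α/2))) * (a^(-(α/2)))⁻¹ := by ring
        _ = b^(1-α/2) * a^(α/2) := by rw [eb, ea]
        _ = t := by rw [htdef]; ring
    have hptw : ∀ y, ENNReal.ofReal ‖((u x - u y) * (v x - v y)) / ‖x - y‖ ^ ((n:ℝ) + α)‖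
        ≤ ENNReal.ofReal (min (a * ‖x - y‖ ^ (2:ℝ)) b * ‖x - y‖ ^ (-((n:ℝ)+α))) := by
      intro y
      apply ENNReal.ofReal_le_ofReal
      rw [Real.norm_eq_abs, abs_div, abs_of_nonneg (Real.rpow_nonneg (norm_nonneg _) _),
        div_eq_mul_inv, ← Real.rpow_neg (norm_nonneg _)]
      apply mul_le_mul_of_nonneg_right ?_ (Real.rpow_nonneg (norm_nonneg _) _)
      rw [abs_mul]
      refine le_min ?_ ?_
      · calc |u x - u y| * |v x - v y| ≤ ((Lu:ℝ) * ‖x - y‖) * ((Lv:ℝ) * ‖x - y‖) :=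
            mul_le_mul ((hbu y).trans (min_le_left _ _)) ((hbv y).trans (min_le_left _ _))
              (abs_nonneg _) (by positivity)
          _ = a * ‖x - y‖ ^ (2:ℝ) := by
              rw [show ((2:ℝ)) = ((2:ℕ):ℝ) by norm_num, Real.rpow_natCast]
              ring
      · calc |u x - u y| * |v x - v y| ≤ (2*Mu) * (2*Mv) :=
            mul_le_mul ((hbu y).trans (min_le_right _ _)) ((hbv y).trans (min_le_right _ _))
              (abs_nonneg _) (by linarith)
          _ = b := by rw [hbdef]; ring
    have hlin : ∫⁻ y, ENNReal.ofReal ‖((u x - u y) * (v x - v y)) / ‖x - y‖ ^ ((n:ℝ) + α)‖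
        ≤ S * (ENNReal.ofReal (a * R ^ ((2:ℝ) - α) / ((2:ℝ) - α)) +
            ENNReal.ofReal (b * R ^ (-α) / α)) :=
      (lintegral_mono hptw).trans
        (Stmt12Aux.master hn hα (by linarith : α < (2:ℝ)) ha.le hb.le hR x)
    have hfin : S * (ENNReal.ofReal (a * R ^ ((2:ℝ) - α) / ((2:ℝ) - α)) +
        ENNReal.ofReal (b * R ^ (-α) / α)) ≠ ⊤ :=
      ENNReal.mul_ne_top hSne
        (ENNReal.add_ne_top.mpr ⟨ENNReal.ofReal_ne_top, ENNReal.ofReal_ne_top⟩)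
    have habs : |∫ y, ((u x - u y) * (v x - v y)) / ‖x - y‖ ^ ((n:ℝ) + α)|
        ≤ (S * (ENNReal.ofReal (a * R ^ ((2:ℝ) - α) / ((2:ℝ) - α)) +
            ENNReal.ofReal (b * R ^ (-α) / α))).toReal := by
      calc |∫ y, ((u x - u y) * (v x - v y)) / ‖x - y‖ ^ ((n:ℝ) + α)|
          = ‖∫ y, ((u x - u y) * (v x - v y)) / ‖x - y‖ ^ ((n:ℝ) + α)‖ :=
            (Real.norm_eq_abs _).symm
        _ ≤ (∫⁻ y, ENNReal.ofReal
              ‖((u x - u y) * (v x - v y)) / ‖x - y‖ ^ ((n:ℝ) + α)‖).toReal :=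
            norm_integral_le_lintegral_norm _
        _ ≤ _ := ENNReal.toReal_mono hfin hlin
    have hTR : (S * (ENNReal.ofReal (a * R ^ ((2:ℝ) - α) / ((2:ℝ) - α)) +
        ENNReal.ofReal (b * R ^ (-α) / α))).toReal = K0 * (t/(2-α) + t/α) := by
      rw [ENNReal.toReal_mul, ENNReal.toReal_add ENNReal.ofReal_ne_top ENNReal.ofReal_ne_top,
        ENNReal.toReal_ofReal (div_nonneg (mul_nonneg ha.le (Real.rpow_nonneg hR.le _)) h2α.le),
        ENNReal.toReal_ofReal (div_nonneg (mul_nonneg hb.le (Real.rpow_nonneg hR.le _)) hα0.le),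
        h1, h2]
    have ht4 : t ≤ 4 * (((Lu:ℝ) ^ (α / 2) * Mu ^ (1 - α / 2)) *
        ((Lv:ℝ) ^ (α / 2) * Mv ^ (1 - α / 2))) := by
      have e1 : a ^ (α/2) = (Lu:ℝ)^(α/2) * (Lv:ℝ)^(α/2) :=
        Real.mul_rpow (NNReal.coe_nonneg _) (NNReal.coe_nonneg _)
      have e2 : b ^ (1-α/2) = (4:ℝ)^(1-α/2) * (Mu^(1-α/2) * Mv^(1-α/2)) := by
        rw [hbdef, Real.mul_rpow (by norm_num) (mul_nonneg hMu0 hMv0),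
          Real.mul_rpow hMu0 hMv0]
      have e3 : (4:ℝ)^(1-α/2) ≤ 4 := by
        calc (4:ℝ)^(1-α/2) ≤ (4:ℝ)^(1:ℝ) :=
            Real.rpow_le_rpow_of_exponent_le (by norm_num) (by linarith)
          _ = 4 := Real.rpow_one 4
      calc t = (4:ℝ)^(1-α/2) * (((Lu:ℝ)^(α/2) * Mu^(1-α/2)) *
            ((Lv:ℝ)^(α/2) * Mv^(1-α/2))) := by rw [htdef, e1, e2]; ring
        _ ≤ 4 * (((Lu:ℝ)^(α/2) * Mu^(1-α/2)) * ((Lv:ℝ)^(α/2) * Mv^(1-α/2))) :=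
            mul_le_mul_of_nonneg_right e3 hRHSnn
    rw [hid, abs_mul, abs_neg, abs_of_pos hc]
    calc c * |∫ y, ((u x - u y) * (v x - v y)) / ‖x - y‖ ^ ((n:ℝ) + α)|
        ≤ c * (K0 * (t/(2-α) + t/α)) :=
          mul_le_mul_of_nonneg_left (habs.trans (le_of_eq hTR)) hc.le
      _ = c * (K0 * (t * K1)) := by rw [hK1def]; ring
      _ ≤ c * ((K0 + 1) * ((4 * (((Lu:ℝ) ^ (α / 2) * Mu ^ (1 - α / 2)) *
            ((Lv:ℝ) ^ (α / 2) * Mv ^ (1 - α / 2)))) * K1)) := by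
          apply mul_le_mul_of_nonneg_left ?_ hc.le
          apply mul_le_mul (by linarith) (mul_le_mul_of_nonneg_right ht4 hK1.le)
            (mul_nonneg ht0 hK1.le) (by linarith)
      _ = c * (K0 + 1) * K1 * 4 * ((Lu:ℝ) ^ (α / 2) * Mu ^ (1 - α / 2)) *
            ((Lv:ℝ) ^ (α / 2) * Mv ^ (1 - α / 2)) := by ring
end
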